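/- Let X and Y be finite-dimensional real vector spaces, Z ⊆ X a linear subspace, and φ : Z → Y a surjective linear map. Equip X × X* with the canonical symplectic form ω_X((a,α),(b,β)) = β(a) − α(b), and similarly Y × Y* with ω_Y. Set H = {(z, ξ) ∈ X × X* : z ∈ Z and ξ(k) = 0 for all k ∈ ker φ}. Then: (1) H is a coisotropic subspace of (X × X*, ω_X); (2) for each (z, ξ) ∈ H there is a unique η ∈ Y* with η(φ(w)) = ξ(w) for all w ∈ Z, and the map μ : H → Y × Y* defined by μ(z, ξ) = (φ(z), η) is a surjective linear map whose graph {((z,ξ), μ(z,ξ)) : (z,ξ) ∈ H} is a Lagrangian subspace of (X × X*) × (Y × Y*) equipped with the twisted product form ((u₁,u₂),(v₁,v₂)) ↦ ω_X(u₁,v₁) − ω_Y(u₂,v₂). (This is the pointwise linear-algebra content of Proposition 3.2(1): for a submersion f : Z → Y defined on a submanifold Z ⊆ X, the set H = (ker df)^⊥ ⊆ T*X and the induced map μ(x,ξ) = (f(x), ᵗdf⁻¹(ξ)) have Lagrangian graph.) -/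

import Mathlib

/-- The symplectic orthogonal of a subset `W` with respect to a bilinear pairing `ω`. -/
def symplOrth {V : Type*} (ω : V → V → ℝ) (W : Set V) : Set V :=
  {v | ∀ w ∈ W, ω v w = 0}

/-- The canonical symplectic form on `E × E*`: `ω((a,α),(b,β)) = β(a) − α(b)`. -/
def canonForm (E : Type*) [AddCommGroup E] [Module ℝ E] :
    E × Module.Dual ℝ E → E × Module.Dual ℝ E → ℝ :=
  fun u v => v.2 u.1 - u.2 v.1

/-- The twisted product form on `S × T`: `((u₁,u₂),(v₁,v₂)) ↦ ωS u₁ v₁ − ωT u₂ v₂`. -/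
def twistedForm {S T : Type*} (ωS : S → S → ℝ) (ωT : T → T → ℝ) :
    S × T → S × T → ℝ :=
  fun u v => ωS u.1 v.1 - ωT u.2 v.2

/-- Let `Z ⊆ X` be a subspace and `φ : Z → Y` a surjective linear map.
Set `H = {(z,ξ) : z ∈ Z, ξ|_{ker φ} = 0} ⊆ X × X*`. Then `H` is coisotropic for the
canonical symplectic form; for each `(z,ξ) ∈ H` there is a unique `η ∈ Y*` with
`η ∘ φ = ξ|_Z`; and the induced map `μ(z,ξ) = (φ(z), η)` is linear on `H`, surjective onto
`Y × Y*`, and its graph is a Lagrangian subspace of `(X × X*) × (−(Y × Y*))`. -/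
theorem coisotropic_of_submersion_graph_lagrangian
    (X Y : Type*)
    [AddCommGroup X] [Module ℝ X] [FiniteDimensional ℝ X]
    [AddCommGroup Y] [Module ℝ Y] [FiniteDimensional ℝ Y]
    (Z : Submodule ℝ X) (φ : Z →ₗ[ℝ] Y)
    (hφ : Function.Surjective φ)
    (H : Set (X × Module.Dual ℝ X))
    (hH : H = {p | p.1 ∈ Z ∧ ∀ k : Z, φ k = 0 → p.2 k = 0})
    (μ : X × Module.Dual ℝ X → Y × Module.Dual ℝ Y)
    (hμ : ∀ p ∈ H, ∃ hz : p.1 ∈ Z,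
      (μ p).1 = φ ⟨p.1, hz⟩ ∧ ∀ w : Z, (μ p).2 (φ w) = p.2 w) :
    -- (1) `H` is coisotropic
    (symplOrth (canonForm X) H ⊆ H) ∧
    -- (2a) uniqueness of `η`
    (∀ p ∈ H, ∃! η : Module.Dual ℝ Y, ∀ w : Z, η (φ w) = p.2 w) ∧
    -- (2b) `μ` is additive and homogeneous on `H`
    (∀ p ∈ H, ∀ q ∈ H, μ (p + q) = μ p + μ q) ∧
    (∀ (c : ℝ), ∀ p ∈ H, μ (c • p) = c • μ p) ∧
    -- (2c) `μ` is surjective from `H` onto `Y × Y*`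
    (∀ q : Y × Module.Dual ℝ Y, ∃ p ∈ H, μ p = q) ∧
    -- (2d) the graph of `μ` over `H` is Lagrangian in `(X × X*) × (−(Y × Y*))`
    ({pq : (X × Module.Dual ℝ X) × (Y × Module.Dual ℝ Y) | pq.1 ∈ H ∧ μ pq.1 = pq.2} =
      symplOrth (twistedForm (canonForm X) (canonForm Y))
        {pq : (X × Module.Dual ℝ X) × (Y × Module.Dual ℝ Y) | pq.1 ∈ H ∧ μ pq.1 = pq.2}) := by
  have := hH
  subst hH
  -- K : kernel of φ viewed inside X
  set K : Submodule ℝ X := (LinearMap.ker φ).map Z.subtype with hKdef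
  have hK_le : K ≤ Z := Submodule.map_subtype_le _ _
  have hmemH : ∀ p : X × Module.Dual ℝ X,
      (p ∈ {p : X × Module.Dual ℝ X | p.1 ∈ Z ∧ ∀ k : Z, φ k = 0 → p.2 k = 0}) ↔
      (p.1 ∈ Z ∧ p.2 ∈ K.dualAnnihilator) := by
    intro p
    constructor
    · rintro ⟨h1, h2⟩
      refine ⟨h1, ?_⟩
      rw [Submodule.mem_dualAnnihilator]
      rintro x ⟨k, hk, rfl⟩
      exact h2 k hk
    · rintro ⟨h1, h2⟩
      rw [Submodule.mem_dualAnnihilator] at h2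
      exact ⟨h1, fun k hk => h2 k ⟨k, hk, rfl⟩⟩
  -- uniqueness of dual functionals via surjectivity of φ
  have ηeq : ∀ η η' : Module.Dual ℝ Y, (∀ w : Z, η (φ w) = η' (φ w)) → η = η' := by
    intro η η' h
    ext y
    obtain ⟨w, rfl⟩ := hφ y
    exact h w
  -- double annihilator
  have hdd : ∀ v : X, (∀ ξ : Module.Dual ℝ X, ξ ∈ K.dualAnnihilator → ξ v = 0) → v ∈ K :=
    fun v hv => (Subspace.forall_mem_dualAnnihilator_apply_eq_zero_iff K v).mp hv
  -- (1) coisotropic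
  have coiso : symplOrth (canonForm X)
      {p : X × Module.Dual ℝ X | p.1 ∈ Z ∧ ∀ k : Z, φ k = 0 → p.2 k = 0} ⊆
      {p : X × Module.Dual ℝ X | p.1 ∈ Z ∧ ∀ k : Z, φ k = 0 → p.2 k = 0} := by
    intro p hp
    have hν : ∀ z ∈ Z, p.2 z = 0 := by
      intro z hz
      have := hp (z, 0) ((hmemH (z, 0)).mpr ⟨hz, Submodule.zero_mem _⟩)
      simpa [canonForm] using this
    have hv : p.1 ∈ K := by
      apply hdd
      intro ξ hξ
      have := hp (0, ξ) ((hmemH (0, ξ)).mpr ⟨Submodule.zero_mem _, hξ⟩)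
      simpa [canonForm] using this
    exact ⟨hK_le hv, fun k hk => hν k k.2⟩
  -- (2a) existence and uniqueness of η
  have uniq : ∀ p ∈ {p : X × Module.Dual ℝ X | p.1 ∈ Z ∧ ∀ k : Z, φ k = 0 → p.2 k = 0},
      ∃! η : Module.Dual ℝ Y, ∀ w : Z, η (φ w) = p.2 w := by
    intro p hp
    obtain ⟨hz, h1, h2⟩ := hμ p hp
    exact ⟨(μ p).2, h2, fun η' hη' => ηeq _ _ fun w => (hη' w).trans (h2 w).symm⟩
  -- (2b) additivity
  have hadd : ∀ p ∈ {p : X × Module.Dual ℝ X | p.1 ∈ Z ∧ ∀ k : Z, φ k = 0 → p.2 k = 0},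
      ∀ q ∈ {p : X × Module.Dual ℝ X | p.1 ∈ Z ∧ ∀ k : Z, φ k = 0 → p.2 k = 0},
      μ (p + q) = μ p + μ q := by
    intro p hp q hq
    have hpq : (p + q) ∈ {p : X × Module.Dual ℝ X | p.1 ∈ Z ∧ ∀ k : Z, φ k = 0 → p.2 k = 0} :=
      ⟨Z.add_mem hp.1 hq.1, fun k hk => by
        simp only [Prod.snd_add, LinearMap.add_apply, hp.2 k hk, hq.2 k hk, add_zero]⟩
    obtain ⟨hzp, hp1, hp2⟩ := hμ p hp
    obtain ⟨hzq, hq1, hq2⟩ := hμ q hq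
    obtain ⟨hzpq, hpq1, hpq2⟩ := hμ (p + q) hpq
    have e1 : (μ (p + q)).1 = (μ p).1 + (μ q).1 := by
      rw [hp1, hq1, hpq1, ← map_add]
      congr 1
    have e2 : (μ (p + q)).2 = (μ p).2 + (μ q).2 := by
      apply ηeq
      intro w
      rw [hpq2 w]
      simp [hp2 w, hq2 w]
    exact Prod.ext (by simpa using e1) (by simpa using e2)
  -- (2b') homogeneity
  have hsmul : ∀ (c : ℝ), ∀ p ∈ {p : X × Module.Dual ℝ X | p.1 ∈ Z ∧ ∀ k : Z, φ k = 0 → p.2 k = 0},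
      μ (c • p) = c • μ p := by
    intro c p hp
    have hcp : (c • p) ∈ {p : X × Module.Dual ℝ X | p.1 ∈ Z ∧ ∀ k : Z, φ k = 0 → p.2 k = 0} :=
      ⟨Z.smul_mem c hp.1, fun k hk => by
        simp only [Prod.smul_snd, LinearMap.smul_apply, hp.2 k hk, smul_zero]⟩
    obtain ⟨hzp, hp1, hp2⟩ := hμ p hp
    obtain ⟨hzcp, hcp1, hcp2⟩ := hμ (c • p) hcp
    have e1 : (μ (c • p)).1 = c • (μ p).1 := by
      rw [hp1, hcp1, ← map_smul]
      congr 1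
    have e2 : (μ (c • p)).2 = c • (μ p).2 := by
      apply ηeq
      intro w
      rw [hcp2 w]
      simp [hp2 w]
    exact Prod.ext (by simpa using e1) (by simpa using e2)
  -- (2c) surjectivity
  have hsurj : ∀ q : Y × Module.Dual ℝ Y,
      ∃ p ∈ {p : X × Module.Dual ℝ X | p.1 ∈ Z ∧ ∀ k : Z, φ k = 0 → p.2 k = 0}, μ p = q := by
    rintro ⟨y, η⟩
    obtain ⟨u, hu⟩ := hφ y
    obtain ⟨ξ, hξ⟩ := LinearMap.exists_extend (η.comp φ)
    have hξ' : ∀ w : Z, ξ w = η (φ w) := by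
      intro w
      have := congrArg (fun f => f w) hξ
      simpa using this
    have hpH : ((u : X), ξ) ∈ {p : X × Module.Dual ℝ X | p.1 ∈ Z ∧ ∀ k : Z, φ k = 0 → p.2 k = 0} :=
      ⟨u.2, fun k hk => by simp [hξ' k, hk]⟩
    refine ⟨((u : X), ξ), hpH, ?_⟩
    obtain ⟨hz, h1, h2⟩ := hμ _ hpH
    have e1 : (μ ((u : X), ξ)).1 = y := by
      rw [h1, ← hu]
    have e2 : (μ ((u : X), ξ)).2 = η := by
      apply ηeq
      intro w
      rw [h2 w]
      exact hξ' w
    exact Prod.ext e1 e2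
  -- (2d) Lagrangian graph
  refine ⟨coiso, uniq, hadd, hsmul, hsurj, ?_⟩
  apply Set.Subset.antisymm
  · -- isotropic
    intro pq hpq rs hrs
    obtain ⟨hp, hq⟩ := hpq
    obtain ⟨hr, hs⟩ := hrs
    obtain ⟨hzp, hp1, hp2⟩ := hμ _ hp
    obtain ⟨hzr, hr1, hr2⟩ := hμ _ hr
    simp only [twistedForm, canonForm, ← hq, ← hs]
    rw [hp1, hr1, hr2, hp2]
    simp only [Submodule.coe_mk]
    ring
  · -- coisotropic direction
    rintro ⟨⟨v, ν⟩, ⟨y, η⟩⟩ horth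
    obtain ⟨u, hu⟩ := hφ y
    -- test against (z, 0) for z ∈ Z
    have step1 : ∀ w : Z, ν w = η (φ w) := by
      intro w
      have hpH : (((w : X)), (0 : Module.Dual ℝ X)) ∈
          {p : X × Module.Dual ℝ X | p.1 ∈ Z ∧ ∀ k : Z, φ k = 0 → p.2 k = 0} :=
        ⟨w.2, fun k _ => rfl⟩
      obtain ⟨hz, h1, h2⟩ := hμ _ hpH
      have hμ2 : (μ ((w : X), (0 : Module.Dual ℝ X))).2 = 0 := by
        apply ηeq
        intro w'
        simpa using h2 w'
      have h1' : (μ ((w : X), (0 : Module.Dual ℝ X))).1 = φ w := by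
        rw [h1]
      have := horth (((w : X), 0), μ ((w : X), 0)) ⟨hpH, rfl⟩
      simp only [twistedForm, canonForm, hμ2, h1', LinearMap.zero_apply] at this
      linarith
    -- test against (0, ξ) for ξ ∈ ann K
    have step2 : v - (u : X) ∈ K := by
      apply hdd
      intro ξ hξ
      have hpH : ((0 : X), ξ) ∈
          {p : X × Module.Dual ℝ X | p.1 ∈ Z ∧ ∀ k : Z, φ k = 0 → p.2 k = 0} :=
        ⟨Z.zero_mem, fun k hk => by
          rw [Submodule.mem_dualAnnihilator] at hξ
          exact hξ k ⟨k, hk, rfl⟩⟩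
      obtain ⟨hz, h1, h2⟩ := hμ _ hpH
      have h1' : (μ ((0 : X), ξ)).1 = 0 := by
        rw [h1]
        convert map_zero φ using 2
        rfl
      have := horth (((0 : X), ξ), μ ((0 : X), ξ)) ⟨hpH, rfl⟩
      simp only [twistedForm, canonForm, h1', map_zero] at this
      have hξu : (μ ((0 : X), ξ)).2 y = ξ u := by
        rw [← hu, h2 u]
      simp only [hξu, map_zero] at this
      have : ξ v = ξ u := by linarith
      simp [map_sub, this]
    obtain ⟨k, hk, hkeq⟩ := step2
    have hvZ : v ∈ Z := by
      have : v = (u : X) + (v - (u : X)) := by abel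
      rw [this]
      exact Z.add_mem u.2 (hK_le ⟨k, hk, hkeq⟩)
    have hpH : ((v, ν)) ∈ {p : X × Module.Dual ℝ X | p.1 ∈ Z ∧ ∀ k : Z, φ k = 0 → p.2 k = 0} :=
      ⟨hvZ, fun k' hk' => by rw [step1 k', hk', map_zero]⟩
    refine ⟨hpH, ?_⟩
    obtain ⟨hz, h1, h2⟩ := hμ _ hpH
    have e1 : (μ (v, ν)).1 = y := by
      rw [h1]
      have hvu : (⟨v, hz⟩ : Z) = u + k := by
        have hkeq' : (k : X) = v - (u : X) := hkeq
        ext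
        simp only [Submodule.coe_add]
        rw [hkeq']
        abel
      rw [hvu, map_add, hu, LinearMap.mem_ker.mp hk, add_zero]
    have e2 : (μ (v, ν)).2 = η := by
      apply ηeq
      intro w
      rw [h2 w]
      exact step1 w
    exact Prod.ext e1 e2
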